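/- arXiv:2407.02375 — 2 statements merged into one kernel-verified Lean document; each statement's English description precedes it below -/
import Mathlib

section
/- For every polynomial f in Poly and every i ≥ 1 one has x_i·R_i(∂_i f) = R_{i+1}f − R_i f, and consequently the (finitely supported) sum Σ_{i≥1} x_i·R_i(∂_i f) equals f − R_1 f. -/
/-
Conventions: `Pol = MvPolynomial ℕ ℤ` with the Lean variable `X i` representing
the paper's variable `x_{i+1}` (0-indexed).  All operators carrying a paper index
`i ≥ 1` are represented by Lean operators indexed by `i : ℕ` (Lean `i` ↔ paper `i+1`),
and sequences of positive integers are represented by sequences of natural numbers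
(entry `v` ↔ paper entry `v+1`).
-/

open MvPolynomial
open scoped Classical

abbrev Pol := MvPolynomial ℕ ℤ

noncomputable section

/-- Interchange the variables `x_{i+1}` and `x_{i+2}` (paper indexing). -/
def swapVar (i : ℕ) (f : Pol) : Pol := rename (Equiv.swap i (i+1)) f

/-- Exact division: the unique `g` with `d * g = f` when it exists (`0` otherwise). -/
def exactDiv (d f : Pol) : Pol := if h : ∃ g : Pol, d * g = f then h.choose else 0

/-- The divided difference operator `∂_{i+1}` (paper indexing). -/
def ddiff (i : ℕ) (f : Pol) : Pol := exactDiv (X i - X (i+1)) (f - swapVar i f)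

/-- The Bergeron–Sottile operator `R_{i+1}` (paper indexing): `x_j ↦ x_j` for
`j < i+1`, `x_{i+1} ↦ 0`, `x_j ↦ x_{j-1}` for `j > i+1`. -/
def BS (i : ℕ) : Pol →ₐ[ℤ] Pol :=
  aeval fun j => if j < i then X j else if j = i then 0 else X (j-1)

/-- `m`-fold iterate of `BS i`. -/
def BSit (i m : ℕ) (f : Pol) : Pol := (fun g => BS i g)^[m] f

/-- `Z g = Σ_{k ≥ 0} R₁ᵏ g`. -/
def Zop (f : Pol) : Pol := ∑ᶠ k : ℕ, BSit 0 k f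

/-- `Z^{(m)} g = Σ_{k ≥ 0} R₁^{km} g`. -/
def Zm (m : ℕ) (f : Pol) : Pol := ∑ᶠ k : ℕ, BSit 0 (k * m) f

/-- The truncation operator keeping the first `n` variables: `Π_n` in paper indexing. -/
def truncOp (n : ℕ) : Pol →ₐ[ℤ] Pol := aeval fun j => if j < n then X j else 0

/-- The quasisymmetric divided difference `T_{i+1}` defined as the exact quotient
`((R_{i+2} - R_{i+1})f)/x_{i+1}` (paper indexing). -/
def TqDiv (i : ℕ) (f : Pol) : Pol := exactDiv (X i) (BS (i+1) f - BS i f)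

/-- The quasisymmetric divided difference `T_{i+1} = R_{i+1} ∘ ∂_{i+1}` (paper indexing). -/
def Tq (i : ℕ) (f : Pol) : Pol := BS i (ddiff i f)

/-- The `m`-quasisymmetric divided difference `T^{(m)}_{i+1}` (paper indexing). -/
def Tm (m i : ℕ) (f : Pol) : Pol := exactDiv (X i) (BSit (i+1) m f - BSit i m f)

/-- The slide extractor `D_{i+1} = Π_{i+1} ∘ ∂_{i+1}` (paper indexing). -/
def Dop (i : ℕ) (f : Pol) : Pol := truncOp (i+1) (ddiff i f)

/-- The `m`-slide extractor `D^{(m)}_{i+1} = Π_{i+1} ∘ T^{(m)}_{i+1}` (paper indexing). -/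
def Dm (m i : ℕ) (f : Pol) : Pol := truncOp (i+1) (Tm m i f)

/-- The slide creator `B_{i+1} f = Σ_{k=1}^{i+1} x_k · R_k^{i+1-k}(Π_{i+1} f)` (paper indexing). -/
def Bop (i : ℕ) (f : Pol) : Pol :=
  ∑ k ∈ Finset.range (i+1), X k * BSit k (i - k) (truncOp (i+1) f)

/-- The creation operator `Z ∘ x_{i+1} ∘ R_{i+1}` (paper indexing). -/
def crea (i : ℕ) (f : Pol) : Pol := Zop (X i * BS i f)

/-- A permutation of `{0,1,2,…}` is finitely supported if it fixes all but
finitely many points. -/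
def FinSupp (w : Equiv.Perm ℕ) : Prop := Set.Finite {x | w x ≠ x}

/-- Coxeter length: the minimal `k` such that `w` is a product of `k` simple
transpositions. -/
def len (w : Equiv.Perm ℕ) : ℕ :=
  sInf {k | ∃ l : List ℕ, l.length = k ∧ (l.map fun i => Equiv.swap i (i+1)).prod = w}

/-- The set of reduced words for `w`. -/
def Red (w : Equiv.Perm ℕ) : Set (List ℕ) :=
  {l | l.length = len w ∧ (l.map fun i => Equiv.swap i (i+1)).prod = w}

/-- A family of polynomials indexed by permutations is a family of Schubert
polynomials if: each member is homogeneous of degree the length, the identity is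
sent to `1`, and divided differences act as expected (all this for finitely
supported permutations). -/
def IsSchubertFamily (S : Equiv.Perm ℕ → Pol) : Prop :=
  (∀ w, FinSupp w → (S w).IsHomogeneous (len w)) ∧
  S 1 = 1 ∧
  ∀ w, FinSupp w → ∀ i : ℕ,
    ddiff i (S w) = if w (i+1) < w i then S (w * Equiv.swap i (i+1)) else 0

/-- `b` is a compatible sequence for `a`. -/
def Compat {k : ℕ} (a b : Fin k → ℕ) : Prop :=
  Monotone b ∧ (∀ j, b j ≤ a j) ∧
  ∀ (j : ℕ) (h : j + 1 < k),
    a ⟨j, Nat.lt_of_succ_lt h⟩ < a ⟨j+1, h⟩ → b ⟨j, Nat.lt_of_succ_lt h⟩ < b ⟨j+1, h⟩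

/-- The slide polynomial `𝔉_a`, as the sum of the monomials of all compatible
sequences for `a`. -/
def slide {k : ℕ} (a : Fin k → ℕ) : Pol :=
  ∑ᶠ b ∈ {b : Fin k → ℕ | Compat a b}, ∏ j, X (b j)

/-- `b` is an `m`-compatible sequence for `a` (entrywise congruent mod `m`). -/
def MCompat (m : ℕ) {k : ℕ} (a b : Fin k → ℕ) : Prop :=
  Monotone b ∧ (∀ j, b j ≤ a j ∧ b j % m = a j % m) ∧
  ∀ (j : ℕ) (h : j + 1 < k),
    a ⟨j, Nat.lt_of_succ_lt h⟩ < a ⟨j+1, h⟩ → b ⟨j, Nat.lt_of_succ_lt h⟩ < b ⟨j+1, h⟩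

/-- The `m`-slide polynomial `𝔉ᵐ_a`. -/
def mslide (m : ℕ) {k : ℕ} (a : Fin k → ℕ) : Pol :=
  ∑ᶠ b ∈ {b : Fin k → ℕ | MCompat m a b}, ∏ j, X (b j)

/-- Value of the `m`-slide creator `B^{(m)}_{a+1}` (paper indexing) on the monomial with
exponent vector `d`. -/
def BmMono (m a : ℕ) (d : ℕ →₀ ℕ) : Pol :=
  if ∃ t, a < t ∧ d t ≠ 0 then 0
  else monomial (d.erase a) 1 *
    ∑ r ∈ Finset.range (a+1),
      if r * m ≤ a ∧ ∀ t, t < a → d t ≠ 0 → t < a - r * m then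
        X (a - r * m) ^ (d a + 1) else 0

/-- The `m`-slide creator `B^{(m)}_{a+1}` (paper indexing), extended linearly from
its values on monomials. -/
def Bm (m a : ℕ) (f : Pol) : Pol := ∑ d ∈ f.support, C (f.coeff d) * BmMono m a d

end

lemma swap_dvd (i : ℕ) (f : Pol) : (X i - X (i+1) : Pol) ∣ (f - swapVar i f) := by
  unfold swapVar
  induction f using MvPolynomial.induction_on with
  | C a => simp
  | add p q hp hq =>
    rw [map_add]
    have := dvd_add hp hq
    convert this using 1; ring
  | mul_X p j hp =>
    rw [map_mul, rename_X]
    have key : p * X j - rename (Equiv.swap i (i+1)) p * X (Equiv.swap i (i+1) j)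
        = (p - rename (Equiv.swap i (i+1)) p) * X j
          + rename (Equiv.swap i (i+1)) p * (X j - X (Equiv.swap i (i+1) j)) := by ring
    rw [key]
    refine dvd_add (Dvd.dvd.mul_right hp _) (Dvd.dvd.mul_left ?_ _)
    rcases eq_or_ne j i with rfl | hji
    · rw [Equiv.swap_apply_left]
    rcases eq_or_ne j (i+1) with rfl | hji'
    · rw [Equiv.swap_apply_right]
      exact ⟨-1, by ring⟩
    · rw [Equiv.swap_apply_of_ne_of_ne hji hji']; simp

lemma ddiff_spec (i : ℕ) (f : Pol) :
    (X i - X (i+1) : Pol) * ddiff i f = f - swapVar i f := by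
  obtain ⟨g, hg⟩ := swap_dvd i f
  have h : ∃ g : Pol, (X i - X (i+1)) * g = f - swapVar i f := ⟨g, hg.symm⟩
  rw [ddiff, exactDiv, dif_pos h]
  exact h.choose_spec

lemma BS_X (i j : ℕ) :
    BS i (X j) = if j < i then X j else if j = i then 0 else X (j-1) := aeval_X _ _

lemma BS_swap (i : ℕ) (f : Pol) : BS i (swapVar i f) = BS (i+1) f := by
  show ((BS i).comp (rename (Equiv.swap i (i+1)))) f = BS (i+1) f
  refine congrFun (congrArg _ (MvPolynomial.algHom_ext fun j => ?_)) f
  rw [AlgHom.comp_apply, rename_X, BS_X, BS_X]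
  by_cases h1 : j < i
  · rw [Equiv.swap_apply_of_ne_of_ne (by omega) (by omega)]
    rw [if_pos h1, if_pos (by omega : j < i + 1)]
  by_cases h2 : j = i
  · subst h2
    rw [Equiv.swap_apply_left]
    rw [if_neg (by omega : ¬ j + 1 < j), if_neg (by omega : ¬ j + 1 = j),
      if_pos (by omega : j < j + 1), Nat.add_sub_cancel]
  by_cases h3 : j = i + 1
  · subst h3
    rw [Equiv.swap_apply_right]
    rw [if_neg (by omega : ¬ i < i), if_pos rfl, if_neg (by omega : ¬ i + 1 < i + 1), if_pos rfl]
  · rw [Equiv.swap_apply_of_ne_of_ne h2 h3]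
    rw [if_neg h1, if_neg h2, if_neg (by omega : ¬ j < i + 1), if_neg h3]

lemma BS_eq_self {i : ℕ} {f : Pol} (h : ∀ j ∈ f.vars, j < i) : BS i f = f := by
  have : BS i f = aeval X f := by
    show eval₂Hom _ _ f = eval₂Hom _ _ f
    exact eval₂Hom_congr' rfl (fun j hj _ => by simp [h j hj]) rfl
  rw [this, aeval_X_left_apply]


/-- for every `f` and `i ≥ 1`, `x_i·R_i(∂_i f) = R_{i+1}f − R_i f`, and
consequently the (finitely supported) sum `Σ_{i≥1} x_i·R_i(∂_i f)` equals `f − R₁ f`. -/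
theorem stmt_0 (f : Pol) :
    (∀ i : ℕ, X i * BS i (ddiff i f) = BS (i+1) f - BS i f) ∧
    {i : ℕ | X i * BS i (ddiff i f) ≠ 0}.Finite ∧
    ∑ᶠ i : ℕ, X i * BS i (ddiff i f) = f - BS 0 f := by
  have key : ∀ i : ℕ, X i * BS i (ddiff i f) = BS (i+1) f - BS i f := by
    intro i
    have h := congrArg (BS i) (ddiff_spec i f)
    rw [map_mul, map_sub, map_sub, BS_X, BS_X, BS_swap] at h
    simp only [lt_irrefl, if_neg (by omega : ¬ i < i), if_pos rfl,
      if_neg (by omega : ¬ i + 1 < i), if_neg (by omega : ¬ i + 1 = i),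
      Nat.add_sub_cancel] at h
    have : (0 - X i : Pol) * BS i (ddiff i f) = BS i f - BS (i+1) f := h
    linear_combination -this
  set N := f.vars.sup id + 1 with hN
  have hvars : ∀ i, N ≤ i → BS i f = f := fun i hi =>
    BS_eq_self fun j hj => lt_of_lt_of_le (by
      have := Finset.le_sup (f := id) hj
      simp only [id_eq] at this
      omega) hi
  have hzero : ∀ i, N ≤ i → X i * BS i (ddiff i f) = 0 := fun i hi => by
    rw [key, hvars i hi, hvars (i+1) (by omega), sub_self]
  refine ⟨key, ?_, ?_⟩
  · exact Set.Finite.subset (Finset.range N).finite_toSet fun i hi => by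
      simp only [Finset.coe_range, Set.mem_Iio]
      by_contra h
      exact hi (hzero i (by omega))
  · rw [finsum_eq_sum_of_support_subset _ (s := Finset.range N)
      (fun i hi => by
        simp only [Finset.coe_range, Set.mem_Iio]
        by_contra h
        exact hi (hzero i (by omega)))]
    calc ∑ i ∈ Finset.range N, X i * BS i (ddiff i f)
        = ∑ i ∈ Finset.range N, (BS (i+1) f - BS i f) := Finset.sum_congr rfl fun i _ => key i
      _ = BS N f - BS 0 f := Finset.sum_range_sub _ _
      _ = f - BS 0 f := by rw [hvars N le_rfl]
end

section
/- There exists a unique family of polynomials (𝔖_w), indexed by the finitely supported permutations w of {1,2,…}, such that each 𝔖_w is homogeneous of degree ℓ(w), 𝔖_{id} = 1, and for all i ≥ 1: ∂_i 𝔖_w = 𝔖_{w s_i} if i ∈ Des(w), and ∂_i 𝔖_w = 0 otherwise. (These are the Schubert polynomials.) -/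
/-
Conventions: `Pol = MvPolynomial ℕ ℤ` with the Lean variable `X i` representing
the paper's variable `x_{i+1}` (0-indexed).  All operators carrying a paper index
`i ≥ 1` are represented by Lean operators indexed by `i : ℕ` (Lean `i` ↔ paper `i+1`),
and sequences of positive integers are represented by sequences of natural numbers
(entry `v` ↔ paper entry `v+1`).
-/

open MvPolynomial
open scoped Classical

noncomputable section
namespace SchubertAux

open MvPolynomial

/-- adjacent transposition -/
abbrev sw (i : ℕ) : Equiv.Perm ℕ := Equiv.swap i (i+1)

lemma swapVar_swapVar (i : ℕ) (f : Pol) : swapVar i (swapVar i f) = f := by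
  unfold swapVar
  rw [rename_rename]
  have : (⇑(Equiv.swap i (i+1)) ∘ ⇑(Equiv.swap i (i+1))) = id := by
    ext x; simp
  rw [this, rename_id, AlgHom.id_apply]

lemma swapVar_add (i : ℕ) (f g : Pol) : swapVar i (f + g) = swapVar i f + swapVar i g := by
  simp [swapVar]

lemma swapVar_sub (i : ℕ) (f g : Pol) : swapVar i (f - g) = swapVar i f - swapVar i g := by
  simp [swapVar]

lemma swapVar_mul (i : ℕ) (f g : Pol) : swapVar i (f * g) = swapVar i f * swapVar i g := by
  simp [swapVar]

lemma X_ne_X {i j : ℕ} (h : i ≠ j) : (X i : Pol) ≠ X j := by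
  intro hx
  have := congrArg (coeff (Finsupp.single i 1)) hx
  rw [coeff_X_same, coeff_X'] at this
  rw [if_neg (by simp [Finsupp.single_eq_single_iff]; omega)] at this
  exact one_ne_zero this

lemma d_ne_zero (i : ℕ) : (X i - X (i+1) : Pol) ≠ 0 :=
  sub_ne_zero.mpr (X_ne_X (by omega))

lemma dvd_sub_swapVar (i : ℕ) (f : Pol) : (X i - X (i+1) : Pol) ∣ f - swapVar i f := by
  induction f using MvPolynomial.induction_on with
  | C a => simp [swapVar]
  | add p q hp hq =>
      rw [swapVar_add]
      have : p + q - (swapVar i p + swapVar i q) = (p - swapVar i p) + (q - swapVar i q) := by ring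
      rw [this]; exact dvd_add hp hq
  | mul_X p n hp =>
      rw [swapVar_mul]
      have h1 : p * X n - swapVar i p * swapVar i (X n)
          = (p - swapVar i p) * X n + swapVar i p * (X n - swapVar i (X n)) := by ring
      rw [h1]
      refine dvd_add (Dvd.dvd.mul_right hp _) (Dvd.dvd.mul_left ?_ _)
      have hX : swapVar i (X n : Pol) = X (Equiv.swap i (i+1) n) := by simp [swapVar]
      rcases eq_or_ne n i with rfl | hni
      · rw [hX, Equiv.swap_apply_left]
      rcases eq_or_ne n (i+1) with rfl | hni1
      · rw [hX, Equiv.swap_apply_right]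
        have : (X (i+1) - X i : Pol) = -(X i - X (i+1)) := by ring
        rw [this]
        exact dvd_neg.mpr dvd_rfl
      · rw [hX, Equiv.swap_apply_of_ne_of_ne hni hni1]
        simp


lemma exactDiv_eq {d g f : Pol} (hd : d ≠ 0) (h : d * g = f) : exactDiv d f = g := by
  unfold exactDiv
  have hex : ∃ g : Pol, d * g = f := ⟨g, h⟩
  rw [dif_pos hex]
  exact mul_left_cancel₀ hd (hex.choose_spec.trans h.symm)

/-- defining equation of the divided difference -/
lemma ddiff_spec (i : ℕ) (f : Pol) :
    (X i - X (i+1)) * ddiff i f = f - swapVar i f := by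
  obtain ⟨g, hg⟩ := dvd_sub_swapVar i f
  unfold ddiff
  rw [exactDiv_eq (d_ne_zero i) hg.symm, hg]

lemma ddiff_unique {i : ℕ} {f g : Pol} (h : (X i - X (i+1)) * g = f - swapVar i f) :
    ddiff i f = g :=
  mul_left_cancel₀ (d_ne_zero i) ((ddiff_spec i f).trans h.symm)

lemma ddiff_add (i : ℕ) (f g : Pol) : ddiff i (f + g) = ddiff i f + ddiff i g := by
  apply ddiff_unique
  rw [mul_add, ddiff_spec, ddiff_spec, swapVar_add]; ring

lemma ddiff_sub (i : ℕ) (f g : Pol) : ddiff i (f - g) = ddiff i f - ddiff i g := by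
  apply ddiff_unique
  rw [mul_sub, ddiff_spec, ddiff_spec, swapVar_sub]; ring

lemma ddiff_of_invariant {i : ℕ} {f : Pol} (h : swapVar i f = f) : ddiff i f = 0 := by
  apply ddiff_unique; rw [h]; ring

lemma swapVar_ddiff (i : ℕ) (f : Pol) : swapVar i (ddiff i f) = ddiff i f := by
  have h := congrArg (swapVar i) (ddiff_spec i f)
  rw [swapVar_mul] at h
  rw [show swapVar i (X i - X (i+1)) = -(X i - X (i+1)) by
      rw [swapVar_sub]; simp [swapVar]] at h
  rw [swapVar_sub, swapVar_swapVar] at h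
  refine mul_left_cancel₀ (d_ne_zero i) ?_
  rw [ddiff_spec]
  linear_combination -h

lemma ddiff_ddiff (i : ℕ) (f : Pol) : ddiff i (ddiff i f) = 0 :=
  ddiff_of_invariant (swapVar_ddiff i f)

lemma ddiff_mul_invariant {i : ℕ} {g : Pol} (h : swapVar i g = g) (f : Pol) :
    ddiff i (g * f) = g * ddiff i f := by
  apply ddiff_unique
  rw [swapVar_mul, h, mul_left_comm, ddiff_spec]; ring

lemma swapVar_X (j n : ℕ) : swapVar j (X n : Pol) = X (Equiv.swap j (j+1) n) := by
  simp [swapVar]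

lemma swap_apply_eval (j k n : ℕ) : (Equiv.swap j (j+1)) n = if n = j then j+1 else if n = j+1 then j else n := by
  rcases eq_or_ne n j with rfl|h1
  · simp
  rcases eq_or_ne n (j+1) with rfl|h2
  · simp
  · rw [Equiv.swap_apply_of_ne_of_ne h1 h2]; simp [h1, h2]

lemma swapVar_X_of_ne {j n : ℕ} (h1 : n ≠ j) (h2 : n ≠ j+1) :
    swapVar j (X n : Pol) = X n := by
  rw [swapVar_X, Equiv.swap_apply_of_ne_of_ne h1 h2]

/-- `swapVar` as composition of permutations. -/
lemma swapVar_comp (σ τ : Equiv.Perm ℕ) (f : Pol) :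
    rename (⇑σ) (rename (⇑τ) f) = rename (⇑(σ * τ) : ℕ → ℕ) f := by
  rw [rename_rename]; rfl

lemma swapVar_swapVar_comm {i j : ℕ} (h : i + 2 ≤ j) (f : Pol) :
    swapVar i (swapVar j f) = swapVar j (swapVar i f) := by
  unfold swapVar
  rw [swapVar_comp, swapVar_comp]
  congr 2
  ext x
  simp only [Equiv.Perm.mul_apply, Equiv.swap_apply_def]
  split_ifs <;> omega

lemma swapVar_ddiff_disj {i j : ℕ} (hji : j + 1 ≠ i ∧ j ≠ i ∧ j ≠ i + 1 ∧ j + 1 ≠ i + 1)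
    (f : Pol) : swapVar j (ddiff i f) = ddiff i (swapVar j f) := by
  obtain ⟨h1, h2, h3, h4⟩ := hji
  have hs := congrArg (swapVar j) (ddiff_spec i f)
  rw [swapVar_mul, swapVar_sub, swapVar_sub, swapVar_X_of_ne (by omega) (by omega),
    swapVar_X_of_ne (by omega) (by omega)] at hs
  · refine (ddiff_unique ?_).symm
    rw [hs]
    congr 1
    unfold swapVar
    rw [swapVar_comp, swapVar_comp]
    congr 2
    ext x
    simp only [Equiv.Perm.mul_apply, Equiv.swap_apply_def]
    split_ifs <;> omega

lemma ddiff_comm {i j : ℕ} (h : i + 2 ≤ j) (f : Pol) :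
    ddiff i (ddiff j f) = ddiff j (ddiff i f) := by
  have hd : ∀ g, swapVar j (ddiff i g) = ddiff i (swapVar j g) := fun g =>
    swapVar_ddiff_disj (by omega) g
  have hd' : ∀ g, swapVar i (ddiff j g) = ddiff j (swapVar i g) := fun g => by
    have := swapVar_ddiff_disj (i := j) (j := i) (by omega) g
    exact this
  refine mul_left_cancel₀ (d_ne_zero j) (mul_left_cancel₀ (d_ne_zero i) ?_)
  have e1 := ddiff_spec i (ddiff j f)
  have e2 := ddiff_spec j f
  have e2' := congrArg (swapVar i) e2
  rw [swapVar_mul, swapVar_sub, swapVar_sub,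
    swapVar_X_of_ne (by omega) (by omega), swapVar_X_of_ne (by omega) (by omega)] at e2'
  have f1 := ddiff_spec j (ddiff i f)
  have f2 := ddiff_spec i f
  have f2' := congrArg (swapVar j) f2
  rw [swapVar_mul, swapVar_sub, swapVar_sub,
    swapVar_X_of_ne (by omega) (by omega), swapVar_X_of_ne (by omega) (by omega)] at f2'
  rw [hd' f] at e1 e2'
  rw [hd f] at f1 f2'
  have hc : swapVar i (swapVar j f) = swapVar j (swapVar i f) := swapVar_swapVar_comm h f
  linear_combination (X j - X (j+1)) * e1 + e2 - e2' - (X i - X (i+1)) * f1 - f2 + f2' + hc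

lemma swapVar_X_left (i : ℕ) : swapVar i (X i : Pol) = X (i+1) := by
  rw [swapVar_X, Equiv.swap_apply_left]

lemma swapVar_X_right (i : ℕ) : swapVar i (X (i+1) : Pol) = X i := by
  rw [swapVar_X, Equiv.swap_apply_right]

set_option maxHeartbeats 1000000 in
lemma swapVar_braid (i : ℕ) (f : Pol) :
    swapVar i (swapVar (i+1) (swapVar i f)) = swapVar (i+1) (swapVar i (swapVar (i+1) f)) := by
  unfold swapVar
  rw [swapVar_comp, swapVar_comp, swapVar_comp, swapVar_comp]
  congr 2
  ext x
  simp only [Equiv.Perm.mul_apply, Equiv.swap_apply_def]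
  split_ifs <;> omega

/-- key identity: `abc·∂ᵢ∂ᵢ₊₁∂ᵢ f` equals the alternating sum over `S₃`. -/
lemma braid_key (i : ℕ) (f : Pol) :
    (X i - X (i+1)) * ((X (i+1) - X (i+2)) * ((X i - X (i+2)) *
      ddiff i (ddiff (i+1) (ddiff i f))))
    = f - swapVar i f - swapVar (i+1) f + swapVar (i+1) (swapVar i f)
      + swapVar i (swapVar (i+1) f) - swapVar i (swapVar (i+1) (swapVar i f)) := by
  have e21 : i + 1 + 1 = i + 2 := rfl
  have h3 := ddiff_spec i (ddiff (i+1) (ddiff i f))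
  have h2 := ddiff_spec (i+1) (ddiff i f)
  have h1 := ddiff_spec i f
  rw [e21] at h2
  have hgs : swapVar i (ddiff i f) = ddiff i f := swapVar_ddiff i f
  have h2s := congrArg (swapVar i) h2
  rw [swapVar_mul, swapVar_sub, swapVar_sub, hgs, swapVar_X_right i,
    swapVar_X_of_ne (j := i) (n := i+2) (by omega) (by omega)] at h2s
  have h1t := congrArg (swapVar (i+1)) h1
  rw [swapVar_mul, swapVar_sub, swapVar_sub,
    swapVar_X_of_ne (j := i+1) (n := i) (by omega) (by omega), swapVar_X_left (i+1), e21] at h1t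
  have h1st := congrArg (swapVar i) h1t
  rw [swapVar_mul, swapVar_sub, swapVar_sub, swapVar_X_left i,
    swapVar_X_of_ne (j := i) (n := i+2) (by omega) (by omega)] at h1st
  linear_combination ((X (i+1) - X (i+2)) * (X i - X (i+2))) * h3
    + (X i - X (i+2)) * h2 - (X (i+1) - X (i+2)) * h2s + h1 - h1t + h1st

lemma braid_key' (i : ℕ) (f : Pol) :
    (X (i+1) - X (i+2)) * ((X i - X (i+1)) * ((X i - X (i+2)) *
      ddiff (i+1) (ddiff i (ddiff (i+1) f))))
    = f - swapVar (i+1) f - swapVar i f + swapVar i (swapVar (i+1) f)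
      + swapVar (i+1) (swapVar i f) - swapVar (i+1) (swapVar i (swapVar (i+1) f)) := by
  have e21 : i + 1 + 1 = i + 2 := rfl
  have h3 := ddiff_spec (i+1) (ddiff i (ddiff (i+1) f))
  have h2 := ddiff_spec i (ddiff (i+1) f)
  have h1 := ddiff_spec (i+1) f
  rw [e21] at h3 h1
  have hgs : swapVar (i+1) (ddiff (i+1) f) = ddiff (i+1) f := swapVar_ddiff (i+1) f
  have h2s := congrArg (swapVar (i+1)) h2
  rw [swapVar_mul, swapVar_sub, swapVar_sub, hgs,
    swapVar_X_of_ne (j := i+1) (n := i) (by omega) (by omega), swapVar_X_left (i+1), e21] at h2s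
  have h1t := congrArg (swapVar i) h1
  rw [swapVar_mul, swapVar_sub, swapVar_sub, swapVar_X_right i,
    swapVar_X_of_ne (j := i) (n := i+2) (by omega) (by omega)] at h1t
  have h1st := congrArg (swapVar (i+1)) h1t
  rw [swapVar_mul, swapVar_sub, swapVar_sub,
    swapVar_X_of_ne (j := i+1) (n := i) (by omega) (by omega), swapVar_X_right (i+1)] at h1st
  linear_combination ((X i - X (i+1)) * (X i - X (i+2))) * h3
    + (X i - X (i+2)) * h2 - (X i - X (i+1)) * h2s + h1 - h1t + h1st

lemma ddiff_braid (i : ℕ) (f : Pol) :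
    ddiff i (ddiff (i+1) (ddiff i f)) = ddiff (i+1) (ddiff i (ddiff (i+1) f)) := by
  have k1 := braid_key i f
  have k2 := braid_key' i f
  have hb := swapVar_braid i f
  refine mul_left_cancel₀ (d_ne_zero i) (mul_left_cancel₀ (d_ne_zero (i+1))
    (mul_left_cancel₀ (sub_ne_zero.mpr (X_ne_X (show i ≠ i + 2 by omega))) ?_))
  rw [show (i:ℕ)+1+1 = i+2 from rfl]
  linear_combination k1 - k2 - hb

open Finset in
lemma homog_of_d_mul {i m : ℕ} {g : Pol}
    (h : ((X i - X (i+1)) * g).IsHomogeneous (m+1)) : g.IsHomogeneous m := by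
  have hd : (X i - X (i+1) : Pol).IsHomogeneous 1 :=
    (isHomogeneous_X _ i).sub (isHomogeneous_X _ (i+1))
  have key : ∀ e : ℕ, homogeneousComponent (e+1) ((X i - X (i+1)) * g)
      = if e ∈ range (g.totalDegree + 1) then (X i - X (i+1)) * homogeneousComponent e g
        else 0 := by
    intro e
    conv_lhs => rw [show (X i - X (i+1)) * g
      = ∑ e' ∈ range (g.totalDegree + 1), (X i - X (i+1)) * homogeneousComponent e' g by
        rw [← Finset.mul_sum, sum_homogeneousComponent]]
    rw [map_sum]
    rw [Finset.sum_congr rfl (fun e' _ => ?_), Finset.sum_ite_eq' (range (g.totalDegree+1)) e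
      (fun e' => (X i - X (i+1)) * homogeneousComponent e' g)]
    have hmem : (X i - X (i+1)) * homogeneousComponent e' g
        ∈ homogeneousSubmodule ℕ ℤ (e'+1) := by
      rw [mem_homogeneousSubmodule _ _]
      have := hd.mul (homogeneousComponent_isHomogeneous e' g)
      rwa [add_comm 1 e'] at this
    rw [homogeneousComponent_of_mem hmem]
    congr 1
    simp [eq_comm, Nat.succ_inj]
  have hzero : ∀ e : ℕ, e ≠ m → homogeneousComponent e g = 0 := by
    intro e he
    by_cases hr : e ∈ range (g.totalDegree + 1)
    · have h1 := key e
      rw [if_pos hr] at h1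
      have h2 : homogeneousComponent (e+1) ((X i - X (i+1)) * g) = 0 := by
        rw [homogeneousComponent_of_mem ((mem_homogeneousSubmodule _ _).mpr h)]
        rw [if_neg (show ¬(e + 1 = m + 1) by omega)]
      rw [h2] at h1
      exact (mul_eq_zero.mp h1.symm).resolve_left (d_ne_zero i)
    · exact homogeneousComponent_eq_zero' _ _ (fun d hd' => by
        simp only [mem_range, not_lt] at hr
        have : d.degree ≤ g.totalDegree := by
          rw [Finsupp.degree]
          exact Finset.le_sup (f := fun s ↦ ∑ x ∈ s.support, s x) hd'
        omega)
  have hg : g = homogeneousComponent m g := by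
    by_cases hm : m < g.totalDegree + 1
    · conv_lhs => rw [← sum_homogeneousComponent g]
      exact Finset.sum_eq_single_of_mem m (mem_range.mpr hm) (fun e _ he => hzero e he)
    · have hlt : g.totalDegree < m := by omega
      rw [homogeneousComponent_eq_zero m g hlt]
      conv_lhs => rw [← sum_homogeneousComponent g]
      exact Finset.sum_eq_zero (fun e he => hzero e (by simp only [mem_range] at he; omega))
  rw [hg]
  exact homogeneousComponent_isHomogeneous m g

lemma ddiff_homog {i m : ℕ} {f : Pol} (h : f.IsHomogeneous (m+1)) :
    (ddiff i f).IsHomogeneous m := by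
  apply homog_of_d_mul (i := i)
  rw [ddiff_spec]
  exact h.sub (h.rename_isHomogeneous)

/-! ### Support bounds and inversions -/

def SuppIn (w : Equiv.Perm ℕ) (n : ℕ) : Prop := ∀ x, n ≤ x → w x = x

lemma suppIn_mono {w : Equiv.Perm ℕ} {n m : ℕ} (h : SuppIn w n) (hnm : n ≤ m) : SuppIn w m :=
  fun x hx => h x (le_trans hnm hx)

lemma suppIn_one (n : ℕ) : SuppIn 1 n := fun x _ => rfl

lemma suppIn_mul {u v : Equiv.Perm ℕ} {n : ℕ} (hu : SuppIn u n) (hv : SuppIn v n) :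
    SuppIn (u * v) n := fun x hx => by
  rw [Equiv.Perm.mul_apply, hv x hx, hu x hx]

lemma suppIn_inv {w : Equiv.Perm ℕ} {n : ℕ} (h : SuppIn w n) : SuppIn w⁻¹ n := fun x hx => by
  conv_lhs => rw [← h x hx]
  exact w.symm_apply_apply x

lemma suppIn_sw {i n : ℕ} (h : i + 2 ≤ n) : SuppIn (sw i) n := fun x hx => by
  exact Equiv.swap_apply_of_ne_of_ne (by omega) (by omega)

lemma finSupp_iff {w : Equiv.Perm ℕ} : FinSupp w ↔ ∃ n, SuppIn w n := by
  constructor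
  · intro h
    obtain ⟨b, hb⟩ := h.bddAbove
    exact ⟨b + 1, fun x hx => by_contra fun hne => by
      have := hb (Set.mem_setOf.mpr hne); omega⟩
  · rintro ⟨n, hn⟩
    apply Set.Finite.subset (Set.finite_Iio n)
    intro x hx
    simp only [Set.mem_setOf_eq] at hx
    simp only [Set.mem_Iio]
    by_contra hge
    exact hx (hn x (by omega))

lemma finSupp_one : FinSupp (1 : Equiv.Perm ℕ) := finSupp_iff.mpr ⟨0, suppIn_one 0⟩

lemma finSupp_mul {u v : Equiv.Perm ℕ} (hu : FinSupp u) (hv : FinSupp v) : FinSupp (u * v) := by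
  obtain ⟨n, hn⟩ := finSupp_iff.mp hu
  obtain ⟨m, hm⟩ := finSupp_iff.mp hv
  exact finSupp_iff.mpr ⟨max n m, suppIn_mul (suppIn_mono hn (le_max_left _ _))
    (suppIn_mono hm (le_max_right _ _))⟩

lemma finSupp_inv {w : Equiv.Perm ℕ} (h : FinSupp w) : FinSupp w⁻¹ := by
  obtain ⟨n, hn⟩ := finSupp_iff.mp h
  exact finSupp_iff.mpr ⟨n, suppIn_inv hn⟩

lemma finSupp_sw (i : ℕ) : FinSupp (sw i) := finSupp_iff.mpr ⟨i + 2, suppIn_sw le_rfl⟩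

/-- fixed points above the bound are also mapped from below -/
lemma apply_lt_of_suppIn {w : Equiv.Perm ℕ} {n : ℕ} (h : SuppIn w n) {x : ℕ} (hx : x < n) :
    w x < n := by
  by_contra hge
  push_neg at hge
  have := h (w x) hge
  have := w.injective this
  omega

/-! ### Inversions -/

def InvSet (w : Equiv.Perm ℕ) : Set (ℕ × ℕ) := {p | p.1 < p.2 ∧ w p.2 < w p.1}

lemma invSet_subset {w : Equiv.Perm ℕ} {n : ℕ} (h : SuppIn w n) :
    InvSet w ⊆ ↑(Finset.range n ×ˢ Finset.range n) := by
  rintro ⟨a, b⟩ ⟨hab, hw⟩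
  change a < b at hab
  change w b < w a at hw
  simp only [Finset.coe_product, Set.mem_prod, Finset.mem_coe, Finset.mem_range]
  have hb : b < n := by
    by_contra hge
    push_neg at hge
    rw [h b hge] at hw
    have hwa : n ≤ w a := by omega
    have := h (w a) hwa
    have := w.injective this
    omega
  exact ⟨by omega, hb⟩

lemma invSet_finite {w : Equiv.Perm ℕ} (h : FinSupp w) : (InvSet w).Finite := by
  obtain ⟨n, hn⟩ := finSupp_iff.mp h
  exact Set.Finite.subset (Finset.range n ×ˢ Finset.range n).finite_toSet (invSet_subset hn)

def invN (w : Equiv.Perm ℕ) : ℕ := (InvSet w).ncard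

lemma invSet_one : InvSet (1 : Equiv.Perm ℕ) = ∅ := by
  ext ⟨a, b⟩
  simp only [InvSet, Set.mem_setOf_eq, Set.mem_empty_iff_false, iff_false, not_and]
  intro h
  simp only [Equiv.Perm.one_apply]
  omega

lemma invN_one : invN 1 = 0 := by rw [invN, invSet_one, Set.ncard_empty]

lemma swap_lt {i a b : ℕ} (hab : a < b) (hne : ¬(a = i ∧ b = i + 1)) :
    sw i a < sw i b := by
  simp only [sw, Equiv.swap_apply_def]
  split_ifs <;> omega

lemma sw_left (i : ℕ) : sw i i = i + 1 := Equiv.swap_apply_left _ _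
lemma sw_right (i : ℕ) : sw i (i+1) = i := Equiv.swap_apply_right _ _
lemma sw_other {i n : ℕ} (h1 : n ≠ i) (h2 : n ≠ i + 1) : sw i n = n :=
  Equiv.swap_apply_of_ne_of_ne h1 h2
lemma sw_sw (i x : ℕ) : sw i (sw i x) = x := Equiv.swap_apply_self _ _ _

lemma sw_mul_self (i : ℕ) : sw i * sw i = 1 := Equiv.swap_mul_self _ _

lemma invSet_mul_sw_asc {w : Equiv.Perm ℕ} {i : ℕ} (h : w i < w (i+1)) :
    InvSet (w * sw i) = (fun p : ℕ × ℕ => (sw i p.1, sw i p.2)) '' (InvSet w) ∪ {(i, i+1)} := by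
  ext ⟨a, b⟩
  constructor
  · rintro ⟨hab, hw⟩
    change a < b at hab
    change (w * sw i) b < (w * sw i) a at hw
    simp only [Equiv.Perm.mul_apply] at hw
    by_cases hib : a = i ∧ b = i + 1
    · right; simp [hib.1, hib.2]
    · left
      refine ⟨(sw i a, sw i b), ⟨swap_lt hab hib, ?_⟩, by simp [sw_sw]⟩
      simpa [sw_sw] using hw
  · rintro (⟨⟨c, d⟩, ⟨hcd, hw⟩, heq⟩ | heq)
    all_goals try change c < d at hcd
    all_goals try change w d < w c at hw
    · obtain ⟨rfl, rfl⟩ : sw i c = a ∧ sw i d = b := by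
        simpa using heq
      have hne : ¬(c = i ∧ d = i + 1) := by
        rintro ⟨rfl, rfl⟩
        omega
      exact ⟨swap_lt hcd hne, by simpa [Equiv.Perm.mul_apply, sw_sw] using hw⟩
    · obtain ⟨rfl, rfl⟩ : i = a ∧ i + 1 = b := by
        simpa [Prod.ext_iff] using heq.symm
      refine ⟨by omega, ?_⟩
      show (w * sw i) (i+1) < (w * sw i) i
      simpa [Equiv.Perm.mul_apply, sw_left, sw_right] using h

lemma invN_mul_sw_asc {w : Equiv.Perm ℕ} {i : ℕ} (hw : FinSupp w) (h : w i < w (i+1)) :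
    invN (w * sw i) = invN w + 1 := by
  have hfin := invSet_finite hw
  have hinj : Function.Injective (fun p : ℕ × ℕ => (sw i p.1, sw i p.2)) := by
    rintro ⟨a, b⟩ ⟨c, d⟩ hcd
    simp only [Prod.mk.injEq] at hcd
    exact Prod.ext ((sw i).injective hcd.1) ((sw i).injective hcd.2)
  have hnot : (i, i+1) ∉ (fun p : ℕ × ℕ => (sw i p.1, sw i p.2)) '' (InvSet w) := by
    rintro ⟨⟨c, d⟩, ⟨hcd, _⟩, heq⟩
    change c < d at hcd
    obtain ⟨h1, h2⟩ : sw i c = i ∧ sw i d = i + 1 := by simpa using heq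
    have hc : c = i + 1 := by
      have := congrArg (sw i) h1
      rw [sw_sw, sw_left] at this
      exact this
    have hd : d = i := by
      have := congrArg (sw i) h2
      rw [sw_sw, sw_right] at this
      exact this
    omega
  rw [invN, invSet_mul_sw_asc h, Set.union_singleton,
    Set.ncard_insert_of_notMem hnot (hfin.image _),
    Set.ncard_image_of_injective _ hinj, invN]

lemma invN_mul_sw_desc {w : Equiv.Perm ℕ} {i : ℕ} (hw : FinSupp w) (h : w (i+1) < w i) :
    invN (w * sw i) + 1 = invN w := by
  have h' : (w * sw i) i < (w * sw i) (i+1) := by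
    simpa [Equiv.Perm.mul_apply, sw_left, sw_right] using h
  have := invN_mul_sw_asc (finSupp_mul hw (finSupp_sw i)) h'
  rw [mul_assoc, sw_mul_self, mul_one] at this
  omega

lemma apply_ne_apply_succ (w : Equiv.Perm ℕ) (i : ℕ) : w i ≠ w (i + 1) :=
  fun h => by have := w.injective h; omega

lemma eq_one_of_no_descent {w : Equiv.Perm ℕ} (h : ∀ i, w i < w (i+1)) : w = 1 := by
  have hmono : StrictMono w := strictMono_nat_of_lt_succ h
  ext x
  induction x using Nat.strong_induction_on with
  | _ x ih =>
    have hge : x ≤ w x := hmono.le_apply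
    obtain ⟨y, hy⟩ := w.surjective x
    rcases lt_trichotomy y x with hlt | rfl | hgt
    · have := ih y hlt
      simp only [Equiv.Perm.one_apply] at this
      omega
    · simp only [Equiv.Perm.one_apply]
      omega
    · have := hmono hgt
      omega

lemma exists_descent {w : Equiv.Perm ℕ} (h : w ≠ 1) : ∃ i, w (i+1) < w i := by
  by_contra hno
  push_neg at hno
  exact h (eq_one_of_no_descent (fun i => lt_of_le_of_ne (hno i)
    (apply_ne_apply_succ w i)))

lemma eq_one_of_invN_eq_zero {w : Equiv.Perm ℕ} (hw : FinSupp w) (h : invN w = 0) : w = 1 := by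
  by_contra hne
  obtain ⟨i, hi⟩ := exists_descent hne
  have hmem : (i, i+1) ∈ InvSet w := ⟨by omega, hi⟩
  have := (Set.ncard_eq_zero (invSet_finite hw)).mp h
  rw [this] at hmem
  exact hmem

/-! ### Words -/

def wp (l : List ℕ) : Equiv.Perm ℕ := (l.map fun i => Equiv.swap i (i+1)).prod

lemma wp_nil : wp [] = 1 := rfl

lemma wp_append (l₁ l₂ : List ℕ) : wp (l₁ ++ l₂) = wp l₁ * wp l₂ := by
  simp [wp]

lemma wp_cons (i : ℕ) (l : List ℕ) : wp (i :: l) = sw i * wp l := by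
  simp [wp, sw]

lemma wp_concat (l : List ℕ) (i : ℕ) : wp (l ++ [i]) = wp l * sw i := by
  rw [wp_append]; rfl

lemma finSupp_wp (l : List ℕ) : FinSupp (wp l) := by
  induction l with
  | nil => exact finSupp_one
  | cons i t ih => rw [wp_cons]; exact finSupp_mul (finSupp_sw i) ih

lemma invN_wp_le (l : List ℕ) : invN (wp l) ≤ l.length := by
  induction l using List.reverseRecOn with
  | nil => simp [wp_nil, invN_one]
  | append_singleton t i ih =>
    rw [wp_concat]
    rcases lt_or_gt_of_ne (apply_ne_apply_succ (wp t) i) with hasc | hdesc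
    · rw [invN_mul_sw_asc (finSupp_wp t) hasc]
      simp only [List.length_append, List.length_singleton]
      omega
    · have := invN_mul_sw_desc (finSupp_wp t) hdesc
      simp only [List.length_append, List.length_singleton]
      omega

lemma exists_word_aux : ∀ k (w : Equiv.Perm ℕ), FinSupp w → invN w = k →
    ∃ l : List ℕ, wp l = w ∧ l.length = k := by
  intro k
  induction k with
  | zero => exact fun w hw h => ⟨[], by rw [wp_nil, eq_one_of_invN_eq_zero hw h], rfl⟩
  | succ k ih =>
    intro w hw h
    have hne : w ≠ 1 := fun h1 => by rw [h1, invN_one] at h; omega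
    obtain ⟨i, hi⟩ := exists_descent hne
    have hstep := invN_mul_sw_desc hw hi
    obtain ⟨l, hl, hlen⟩ := ih (w * sw i) (finSupp_mul hw (finSupp_sw i)) (by omega)
    refine ⟨l ++ [i], ?_, by simp [hlen]⟩
    rw [wp_concat, hl, mul_assoc, sw_mul_self, mul_one]

/-! ### Length -/

lemma len_le_of_word {w : Equiv.Perm ℕ} {l : List ℕ} (h : wp l = w) : len w ≤ l.length :=
  Nat.sInf_le ⟨l, rfl, h⟩

lemma len_eq_invN {w : Equiv.Perm ℕ} (hw : FinSupp w) : len w = invN w := by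
  obtain ⟨l, hl, hlen⟩ := exists_word_aux (invN w) w hw rfl
  refine le_antisymm (hlen ▸ len_le_of_word hl) ?_
  have hne : {k | ∃ l : List ℕ, l.length = k ∧ (l.map fun i => Equiv.swap i (i+1)).prod = w}.Nonempty :=
    ⟨l.length, l, rfl, hl⟩
  obtain ⟨l', hl'len, hl'⟩ := Nat.sInf_mem hne
  calc invN w = invN (wp l') := by rw [show wp l' = w from hl']
    _ ≤ l'.length := invN_wp_le l'
    _ = len w := hl'len

lemma len_one : len (1 : Equiv.Perm ℕ) = 0 := by
  rw [len_eq_invN finSupp_one, invN_one]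

lemma eq_one_of_len_eq_zero {w : Equiv.Perm ℕ} (hw : FinSupp w) (h : len w = 0) : w = 1 :=
  eq_one_of_invN_eq_zero hw (by rw [← len_eq_invN hw]; exact h)

lemma len_mul_sw_asc {w : Equiv.Perm ℕ} {i : ℕ} (hw : FinSupp w) (h : w i < w (i+1)) :
    len (w * sw i) = len w + 1 := by
  rw [len_eq_invN (finSupp_mul hw (finSupp_sw i)), len_eq_invN hw, invN_mul_sw_asc hw h]

lemma len_mul_sw_desc {w : Equiv.Perm ℕ} {i : ℕ} (hw : FinSupp w) (h : w (i+1) < w i) :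
    len (w * sw i) + 1 = len w := by
  rw [len_eq_invN (finSupp_mul hw (finSupp_sw i)), len_eq_invN hw, invN_mul_sw_desc hw h]

/-! ### Reduced words -/

lemma red_def {w : Equiv.Perm ℕ} {l : List ℕ} :
    l ∈ Red w ↔ l.length = len w ∧ wp l = w := Iff.rfl

lemma red_nonempty {w : Equiv.Perm ℕ} (hw : FinSupp w) : (Red w).Nonempty := by
  obtain ⟨l, hl, hlen⟩ := exists_word_aux (invN w) w hw rfl
  exact ⟨l, by rw [red_def, len_eq_invN hw]; exact ⟨hlen, hl⟩⟩

/-- a canonical reduced word -/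
def redw (w : Equiv.Perm ℕ) : List ℕ :=
  if h : (Red w).Nonempty then h.choose else []

lemma redw_mem {w : Equiv.Perm ℕ} (hw : FinSupp w) : redw w ∈ Red w := by
  rw [redw, dif_pos (red_nonempty hw)]
  exact (red_nonempty hw).choose_spec

lemma red_drop_last {w : Equiv.Perm ℕ} {l₀ : List ℕ} {i : ℕ} (hw : FinSupp w)
    (h : (l₀ ++ [i]) ∈ Red w) : w (i+1) < w i ∧ l₀ ∈ Red (w * sw i) := by
  obtain ⟨hlen, hprod⟩ := red_def.mp h
  rw [wp_concat] at hprod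
  have hl₀ : wp l₀ = w * sw i := by
    rw [← hprod, mul_assoc, sw_mul_self, mul_one]
  simp only [List.length_append, List.length_singleton] at hlen
  have hle : len (w * sw i) ≤ l₀.length := len_le_of_word hl₀
  have hdesc : w (i+1) < w i := by
    rcases lt_or_gt_of_ne (apply_ne_apply_succ w i) with hasc | hd
    · exfalso
      have := len_mul_sw_asc hw hasc
      omega
    · exact hd
  have := len_mul_sw_desc hw hdesc
  exact ⟨hdesc, red_def.mpr ⟨by omega, hl₀⟩⟩

lemma red_concat_of_desc {w : Equiv.Perm ℕ} {l₀ : List ℕ} {i : ℕ} (hw : FinSupp w)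
    (hdesc : w (i+1) < w i) (h : l₀ ∈ Red (w * sw i)) : (l₀ ++ [i]) ∈ Red w := by
  obtain ⟨hlen, hprod⟩ := red_def.mp h
  have := len_mul_sw_desc hw hdesc
  refine red_def.mpr ⟨by simp [hlen]; omega, ?_⟩
  rw [wp_concat, hprod, mul_assoc, sw_mul_self, mul_one]

lemma red_ne_nil {w : Equiv.Perm ℕ} {l : List ℕ} (hw : FinSupp w) (hne : w ≠ 1)
    (h : l ∈ Red w) : l ≠ [] := by
  intro hnil
  subst hnil
  have := (red_def.mp h).2
  rw [wp_nil] at this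
  exact hne this.symm

/-! ### Composite divided differences and word independence -/

def Dw (l : List ℕ) (f : Pol) : Pol := l.foldr ddiff f

lemma Dw_nil (f : Pol) : Dw [] f = f := rfl
lemma Dw_cons (i : ℕ) (l : List ℕ) (f : Pol) : Dw (i :: l) f = ddiff i (Dw l f) := rfl
lemma Dw_append (l₁ l₂ : List ℕ) (f : Pol) : Dw (l₁ ++ l₂) f = Dw l₁ (Dw l₂ f) :=
  List.foldr_append ..
lemma Dw_concat (l : List ℕ) (i : ℕ) (f : Pol) : Dw (l ++ [i]) f = Dw l (ddiff i f) :=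
  Dw_append l [i] f

set_option maxHeartbeats 1000000 in
lemma sw_comm {i j : ℕ} (h : i + 2 ≤ j) : sw i * sw j = sw j * sw i := by
  ext x
  simp only [Equiv.Perm.mul_apply, sw, Equiv.swap_apply_def]
  split_ifs <;> omega

set_option maxHeartbeats 1000000 in
lemma sw_braid (i : ℕ) : sw i * (sw (i+1) * sw i) = sw (i+1) * (sw i * sw (i+1)) := by
  ext x
  simp only [Equiv.Perm.mul_apply, sw, Equiv.swap_apply_def]
  split_ifs <;> omega

lemma mul_sw_apply (w : Equiv.Perm ℕ) (i x : ℕ) : (w * sw i) x = w (sw i x) := rfl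

theorem word_indep : ∀ k (w : Equiv.Perm ℕ), FinSupp w → len w = k →
    ∀ l l', l ∈ Red w → l' ∈ Red w → ∀ f, Dw l f = Dw l' f := by
  intro k
  induction k using Nat.strong_induction_on with
  | _ k ih =>
  intro w hw hlen l l' hl hl' f
  rcases Nat.eq_zero_or_pos k with rfl | hk
  · have h1 : l = [] := List.length_eq_zero_iff.mp ((red_def.mp hl).1.trans hlen)
    have h2 : l' = [] := List.length_eq_zero_iff.mp ((red_def.mp hl').1.trans hlen)
    rw [h1, h2]
  · have hne : w ≠ 1 := fun h1 => by rw [h1, len_one] at hlen; omega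
    -- decompose both words at the last letter
    obtain ⟨t, i, rfl⟩ := (l.eq_nil_or_concat').resolve_left (red_ne_nil hw hne hl)
    obtain ⟨t', j, rfl⟩ := (l'.eq_nil_or_concat').resolve_left (red_ne_nil hw hne hl')
    obtain ⟨hdi, hti⟩ := red_drop_last hw hl
    obtain ⟨hdj, htj⟩ := red_drop_last hw hl'
    have hlen_i : len (w * sw i) = k - 1 := by
      have := len_mul_sw_desc hw hdi; omega
    have hlen_j : len (w * sw j) = k - 1 := by
      have := len_mul_sw_desc hw hdj; omega
    have hfs_i : FinSupp (w * sw i) := finSupp_mul hw (finSupp_sw i)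
    have hfs_j : FinSupp (w * sw j) := finSupp_mul hw (finSupp_sw j)
    rcases eq_or_ne i j with rfl | hij
    · rw [Dw_concat, Dw_concat]
      exact ih (k-1) (by omega) (w * sw i) hfs_i hlen_i t t' hti htj (ddiff i f)
    -- two distinct last letters
    · -- symmetric helper facts
      have main : ∀ (a b : ℕ) (ta tb : List ℕ), a + 2 ≤ b →
          w (a+1) < w a → w (b+1) < w b →
          ta ∈ Red (w * sw a) → tb ∈ Red (w * sw b) →
          Dw (ta ++ [a]) f = Dw (tb ++ [b]) f := by
        intro a b ta tb hab hda hdb hta htb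
        have hfa : FinSupp (w * sw a) := finSupp_mul hw (finSupp_sw a)
        have hfb : FinSupp (w * sw b) := finSupp_mul hw (finSupp_sw b)
        have hla : len (w * sw a) = k - 1 := by have := len_mul_sw_desc hw hda; omega
        have hlb : len (w * sw b) = k - 1 := by have := len_mul_sw_desc hw hdb; omega
        -- b is still a descent of w * sw a
        have hdb' : (w * sw a) (b+1) < (w * sw a) b := by
          rw [mul_sw_apply, mul_sw_apply, sw_other (by omega) (by omega),
            sw_other (by omega) (by omega)]
          exact hdb
        have hda' : (w * sw b) (a+1) < (w * sw b) a := by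
          rw [mul_sw_apply, mul_sw_apply, sw_other (by omega) (by omega),
            sw_other (by omega) (by omega)]
          exact hda
        set u := w * sw a * sw b with hu
        have hfu : FinSupp u := finSupp_mul hfa (finSupp_sw b)
        have hlu : len u + 1 = k - 1 := by
          have := len_mul_sw_desc hfa hdb'
          rw [← hu] at this
          omega
        have hm := redw_mem hfu
        -- m ++ [b] ∈ Red (w * sw a)
        have hmb : (redw u ++ [b]) ∈ Red (w * sw a) := red_concat_of_desc hfa hdb' hm
        -- m ++ [a] ∈ Red (w * sw b)
        have hub : u = w * sw b * sw a := by
          rw [hu, mul_assoc, mul_assoc, sw_comm hab]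
        have hma : (redw u ++ [a]) ∈ Red (w * sw b) :=
          red_concat_of_desc hfb hda' (hub ▸ hm)
        rw [Dw_concat, Dw_concat]
        rw [ih (k-1) (by omega) (w * sw a) hfa hla ta (redw u ++ [b]) hta hmb (ddiff a f)]
        rw [ih (k-1) (by omega) (w * sw b) hfb hlb tb (redw u ++ [a]) htb hma (ddiff b f)]
        rw [Dw_concat, Dw_concat]
        -- now use commutation of divided differences
        have : ∀ g, Dw (redw u) (ddiff b (ddiff a g)) = Dw (redw u) (ddiff a (ddiff b g)) :=
          fun g => by rw [ddiff_comm hab]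
        exact this f
      have adj : ∀ (a : ℕ) (ta tb : List ℕ),
          w (a+1) < w a → w (a+2) < w (a+1) →
          ta ∈ Red (w * sw a) → tb ∈ Red (w * sw (a+1)) →
          Dw (ta ++ [a]) f = Dw (tb ++ [a+1]) f := by
        intro a ta tb hda hdb hta htb
        have hfa : FinSupp (w * sw a) := finSupp_mul hw (finSupp_sw a)
        have hfb : FinSupp (w * sw (a+1)) := finSupp_mul hw (finSupp_sw (a+1))
        have hla : len (w * sw a) = k - 1 := by have := len_mul_sw_desc hw hda; omega
        have hlb : len (w * sw (a+1)) = k - 1 := by have := len_mul_sw_desc hw hdb; omega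
        -- chain of descents on the a-side
        have hd1 : (w * sw a) (a+2) < (w * sw a) (a+1) := by
          show w (sw a (a+2)) < w (sw a (a+1))
          rw [sw_other (by omega) (by omega), sw_right]
          omega
        have hfab : FinSupp (w * sw a * sw (a+1)) := finSupp_mul hfa (finSupp_sw (a+1))
        have hd2 : (w * sw a * sw (a+1)) (a+1) < (w * sw a * sw (a+1)) a := by
          show w (sw a (sw (a+1) (a+1))) < w (sw a (sw (a+1) a))
          rw [sw_left, show (a:ℕ)+1+1 = a+2 from rfl, sw_other (show a+2 ≠ a by omega)
            (show a+2 ≠ a+1 by omega), sw_other (show a ≠ a+1 by omega) (show a ≠ a+2 by omega),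
            sw_left]
          omega
        set u := w * sw a * sw (a+1) * sw a with hu
        have hfu : FinSupp u := finSupp_mul hfab (finSupp_sw a)
        have hm := redw_mem hfu
        -- (redw u ++ [a]) ++ [a+1] ∈ Red (w * sw a)
        have h1 : (redw u ++ [a]) ∈ Red (w * sw a * sw (a+1)) := red_concat_of_desc hfab hd2 hm
        have h2 : ((redw u ++ [a]) ++ [a+1]) ∈ Red (w * sw a) := red_concat_of_desc hfa hd1 h1
        -- mirror side
        have hd1' : (w * sw (a+1)) (a+1) < (w * sw (a+1)) a := by
          show w (sw (a+1) (a+1)) < w (sw (a+1) a)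
          rw [sw_left, show (a:ℕ)+1+1 = a+2 from rfl, sw_other (show a ≠ a+1 by omega)
            (show a ≠ a+2 by omega)]
          omega
        have hfba : FinSupp (w * sw (a+1) * sw a) := finSupp_mul hfb (finSupp_sw a)
        have hd2' : (w * sw (a+1) * sw a) (a+2) < (w * sw (a+1) * sw a) (a+1) := by
          show w (sw (a+1) (sw a (a+2))) < w (sw (a+1) (sw a (a+1)))
          rw [sw_other (show a+2 ≠ a by omega) (show a+2 ≠ a+1 by omega), sw_right, sw_right,
            sw_other (show a ≠ a+1 by omega) (show a ≠ a+2 by omega)]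
          omega
        have hub : u = w * sw (a+1) * sw a * sw (a+1) := by
          simp only [hu, mul_assoc, sw_braid]
        have h1' : (redw u ++ [a+1]) ∈ Red (w * sw (a+1) * sw a) :=
          red_concat_of_desc hfba hd2' (hub ▸ hm)
        have h2' : ((redw u ++ [a+1]) ++ [a]) ∈ Red (w * sw (a+1)) := red_concat_of_desc hfb hd1' h1'
        rw [Dw_concat, Dw_concat]
        rw [ih (k-1) (by omega) (w * sw a) hfa hla ta _ hta h2 (ddiff a f)]
        rw [ih (k-1) (by omega) (w * sw (a+1)) hfb hlb tb _ htb h2' (ddiff (a+1) f)]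
        rw [Dw_concat, Dw_concat, Dw_concat, Dw_concat]
        rw [ddiff_braid a f]
      rcases lt_or_gt_of_ne hij with hlt | hgt
      · rcases Nat.lt_or_ge (i+1) j with h2 | h2
        · exact main i j t t' (by omega) hdi hdj hti htj
        · have : j = i + 1 := by omega
          subst this
          exact adj i t t' hdi hdj hti htj
      · rcases Nat.lt_or_ge (j+1) i with h2 | h2
        · exact (main j i t' t (by omega) hdj hdi htj hti).symm
        · have : i = j + 1 := by omega
          subst this
          exact (adj j t' t hdj hdi htj hti).symm

/-! ### The longest element of S_n and the staircase -/

def w0fun (n : ℕ) : ℕ → ℕ := fun x => if x < n then n - 1 - x else x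

lemma w0fun_invol (n : ℕ) : Function.Involutive (w0fun n) := by
  intro x
  unfold w0fun
  split_ifs <;> omega

def w0p (n : ℕ) : Equiv.Perm ℕ := (w0fun_invol n).toPerm

lemma w0p_apply (n x : ℕ) : w0p n x = if x < n then n - 1 - x else x := rfl

lemma suppIn_w0p (n : ℕ) : SuppIn (w0p n) n := fun x hx => by
  rw [w0p_apply, if_neg (by omega)]

lemma finSupp_w0p (n : ℕ) : FinSupp (w0p n) := finSupp_iff.mpr ⟨n, suppIn_w0p n⟩

lemma w0p_mul_self (n : ℕ) : w0p n * w0p n = 1 := by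
  ext x
  simp only [Equiv.Perm.mul_apply, Equiv.Perm.one_apply, w0p_apply]
  split_ifs <;> omega

lemma w0p_inv (n : ℕ) : (w0p n)⁻¹ = w0p n :=
  inv_eq_of_mul_eq_one_left (w0p_mul_self n)

lemma w0p_zero : w0p 0 = 1 := by
  ext x
  simp only [w0p_apply, Equiv.Perm.one_apply]
  split_ifs <;> omega

lemma w0p_one : w0p 1 = 1 := by
  ext x
  simp only [w0p_apply, Equiv.Perm.one_apply]
  split_ifs <;> omega

lemma invSet_w0p (n : ℕ) : InvSet (w0p n) = {p : ℕ × ℕ | p.1 < p.2 ∧ p.2 < n} := by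
  ext ⟨a, b⟩
  simp only [InvSet, Set.mem_setOf_eq, w0p_apply]
  constructor
  · rintro ⟨hab, hw⟩
    refine ⟨hab, ?_⟩
    by_contra hb
    rw [if_neg hb] at hw
    split_ifs at hw <;> omega
  · rintro ⟨hab, hb⟩
    refine ⟨hab, ?_⟩
    rw [if_pos hb, if_pos (by omega)]
    omega

/-- the triangle finset -/
def Tri (n : ℕ) : Finset (ℕ × ℕ) :=
  (Finset.range n ×ˢ Finset.range n).filter fun p => p.1 < p.2

lemma invSet_w0p_coe (n : ℕ) : InvSet (w0p n) = ↑(Tri n) := by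
  rw [invSet_w0p]
  ext ⟨a, b⟩
  simp only [Set.mem_setOf_eq, Tri, Finset.coe_filter, Finset.mem_product, Finset.mem_range]
  constructor
  · rintro ⟨h1, h2⟩; exact ⟨⟨by omega, h2⟩, h1⟩
  · rintro ⟨⟨_, h2⟩, h1⟩; exact ⟨h1, h2⟩

lemma tri_card_succ (n : ℕ) : (Tri (n+1)).card = (Tri n).card + n := by
  have hsplit : Tri (n+1) = Tri n ∪ (Finset.range n).image (fun a => (a, n)) := by
    ext ⟨a, b⟩
    simp only [Tri, Finset.mem_union, Finset.mem_filter, Finset.mem_product, Finset.mem_range,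
      Finset.mem_image, Prod.mk.injEq]
    constructor
    · rintro ⟨⟨ha, hb⟩, hab⟩
      rcases Nat.lt_or_ge b n with hbn | hbn
      · exact Or.inl ⟨⟨by omega, hbn⟩, hab⟩
      · exact Or.inr ⟨a, by omega, rfl, by omega⟩
    · rintro (⟨⟨ha, hb⟩, hab⟩ | ⟨c, hc, rfl, rfl⟩)
      · exact ⟨⟨by omega, by omega⟩, hab⟩
      · exact ⟨⟨by omega, by omega⟩, hc⟩
  have hdisj : Disjoint (Tri n) ((Finset.range n).image (fun a => (a, n))) := by
    rw [Finset.disjoint_right]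
    rintro ⟨a, b⟩ hmem h2
    simp only [Finset.mem_image, Finset.mem_range, Prod.mk.injEq] at hmem
    simp only [Tri, Finset.mem_filter, Finset.mem_product, Finset.mem_range] at h2
    obtain ⟨c, _, _, rfl⟩ := hmem
    omega
  rw [hsplit, Finset.card_union_of_disjoint hdisj, Finset.card_image_of_injective _
    (fun a b hab => by simpa using hab), Finset.card_range]

/-- `K n = len (w0p n)` -/
def Kn (n : ℕ) : ℕ := len (w0p n)

lemma Kn_eq_card (n : ℕ) : Kn n = (Tri n).card := by
  rw [Kn, len_eq_invN (finSupp_w0p n), invN, invSet_w0p_coe, Set.ncard_coe_finset]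

lemma Kn_zero : Kn 0 = 0 := by
  rw [Kn, w0p_zero, len_one]

lemma Kn_succ (n : ℕ) : Kn (n+1) = Kn n + n := by
  rw [Kn_eq_card, Kn_eq_card, tri_card_succ]

/-- degree of the staircase -/
def Dn (n : ℕ) : ℕ := ∑ j ∈ Finset.range n, (n - 1 - j)

lemma Dn_succ (n : ℕ) : Dn (n+1) = Dn n + n := by
  unfold Dn
  rw [Finset.sum_range_succ]
  have : ∀ j ∈ Finset.range n, (n + 1 - 1 - j) = (n - 1 - j) + 1 := fun j hj => by
    simp only [Finset.mem_range] at hj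
    omega
  rw [Finset.sum_congr rfl this, Finset.sum_add_distrib]
  simp only [Finset.sum_const, smul_eq_mul, mul_one, Finset.card_range]
  omega

lemma Kn_eq_Dn (n : ℕ) : Kn n = Dn n := by
  induction n with
  | zero => rw [Kn_zero]; rfl
  | succ n ih => rw [Kn_succ, Dn_succ, ih]

/-! ### complement formula -/

lemma invSet_w0p_mul {w : Equiv.Perm ℕ} {n : ℕ} (h : SuppIn w n) :
    InvSet (w0p n * w) = InvSet (w0p n) \ InvSet w ∧ InvSet w ⊆ InvSet (w0p n) := by
  have hsub : InvSet w ⊆ InvSet (w0p n) := by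
    rintro ⟨a, b⟩ ⟨hab, hw⟩
    change a < b at hab
    change w b < w a at hw
    rw [invSet_w0p]
    refine ⟨hab, ?_⟩
    show b < n
    by_contra hb
    push_neg at hb
    rw [h b hb] at hw
    have : n ≤ w a := by omega
    have := h (w a) this
    have := w.injective this
    omega
  refine ⟨?_, hsub⟩
  ext ⟨a, b⟩
  simp only [Set.mem_diff]
  constructor
  · rintro ⟨hab, hw⟩
    change a < b at hab
    change (w0p n * w) b < (w0p n * w) a at hw
    simp only [Equiv.Perm.mul_apply, w0p_apply] at hw
    have hb : b < n := by
      by_contra hbn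
      push_neg at hbn
      rw [h b hbn, if_neg (by omega)] at hw
      rcases Nat.lt_or_ge a n with han | han
      · have hwa := apply_lt_of_suppIn h han
        rw [if_pos hwa] at hw
        omega
      · rw [h a han, if_neg (by omega)] at hw
        omega
    have hwa := apply_lt_of_suppIn h (show a < n by omega)
    have hwb := apply_lt_of_suppIn h hb
    rw [if_pos hwa, if_pos hwb] at hw
    constructor
    · rw [invSet_w0p]; exact ⟨hab, hb⟩
    · rintro ⟨-, hinv⟩
      change w b < w a at hinv
      omega
  · rintro ⟨hmem, hnot⟩
    rw [invSet_w0p] at hmem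
    obtain ⟨hab, hb⟩ := hmem
    change a < b at hab
    change b < n at hb
    refine ⟨hab, ?_⟩
    change (w0p n * w) b < (w0p n * w) a
    have hwa := apply_lt_of_suppIn h (show a < n by omega)
    have hwb := apply_lt_of_suppIn h hb
    simp only [Equiv.Perm.mul_apply, w0p_apply, if_pos hwa, if_pos hwb]
    have hne : w a ≠ w b := fun hh => by have := w.injective hh; omega
    have : ¬(w b < w a) := fun hh => hnot ⟨hab, hh⟩
    omega

lemma len_w0p_mul {w : Equiv.Perm ℕ} {n : ℕ} (h : SuppIn w n) :
    len (w0p n * w) + len w = Kn n := by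
  have hwfs : FinSupp w := finSupp_iff.mpr ⟨n, h⟩
  obtain ⟨heq, hsub⟩ := invSet_w0p_mul h
  have hfin := invSet_finite (finSupp_w0p n)
  have hfinw := invSet_finite hwfs
  rw [Kn, len_eq_invN (finSupp_mul (finSupp_w0p n) hwfs), len_eq_invN hwfs,
    len_eq_invN (finSupp_w0p n), invN, invN, invN, heq,
    Set.ncard_diff hsub hfinw]
  have hle : (InvSet w).ncard ≤ (InvSet (w0p n)).ncard :=
    Set.ncard_le_ncard hsub hfin
  omega

lemma wp_reverse (l : List ℕ) : wp l.reverse = (wp l)⁻¹ := by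
  induction l with
  | nil => simp [wp_nil]
  | cons i t ih =>
    rw [List.reverse_cons, wp_concat, ih, wp_cons, mul_inv_rev, Equiv.swap_inv]

lemma len_inv {w : Equiv.Perm ℕ} (hw : FinSupp w) : len w⁻¹ = len w := by
  have key : ∀ v : Equiv.Perm ℕ, FinSupp v → len v⁻¹ ≤ len v := by
    intro v hv
    obtain ⟨hlen, hprod⟩ := red_def.mp (redw_mem hv)
    have : wp (redw v).reverse = v⁻¹ := by rw [wp_reverse, hprod]
    calc len v⁻¹ ≤ (redw v).reverse.length := len_le_of_word this
      _ = len v := by rw [List.length_reverse, hlen]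
  refine le_antisymm (key w hw) ?_
  have := key w⁻¹ (finSupp_inv hw)
  rwa [inv_inv] at this

lemma len_compl {w : Equiv.Perm ℕ} {n : ℕ} (h : SuppIn w n) :
    len (w⁻¹ * w0p n) + len w = Kn n := by
  have h1 : (w⁻¹ * w0p n)⁻¹ = w0p n * w := by
    rw [mul_inv_rev, inv_inv, w0p_inv]
  have hfs : FinSupp (w⁻¹ * w0p n) :=
    finSupp_mul (finSupp_inv (finSupp_iff.mpr ⟨n, h⟩)) (finSupp_w0p n)
  rw [← len_inv hfs, h1]
  exact len_w0p_mul h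

/-! ### staircase monomial and telescope -/

def staircase (n : ℕ) : Pol := ∏ j ∈ Finset.range n, X j ^ (n - 1 - j)

lemma staircase_homog (n : ℕ) : (staircase n).IsHomogeneous (Dn n) :=
  IsHomogeneous.prod _ _ _ (fun j _ => isHomogeneous_X_pow j (n - 1 - j))

lemma staircase_zero : staircase 0 = 1 := by simp [staircase]

/-- the interpolating monomials -/
def Pk (n k : ℕ) : Pol := ∏ j ∈ Finset.range (n+1), X j ^ (if j < k then n-1-j else n-j)

lemma Pk_zero (n : ℕ) : Pk n 0 = staircase (n+1) := by
  unfold Pk staircase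
  refine Finset.prod_congr rfl (fun j hj => ?_)
  rw [if_neg (by omega)]
  congr 1

lemma Pk_last (n : ℕ) : Pk n n = staircase n := by
  unfold Pk staircase
  rw [Finset.prod_range_succ, if_neg (by omega), Nat.sub_self, pow_zero, mul_one]
  refine Finset.prod_congr rfl (fun j hj => ?_)
  simp only [Finset.mem_range] at hj
  rw [if_pos hj]

lemma ddiff_X_pow (i a : ℕ) : ddiff i (X i ^ (a+1) * X (i+1) ^ a) = X i ^ a * X (i+1) ^ a := by
  apply ddiff_unique
  rw [swapVar_mul]
  rw [show swapVar i (X i ^ (a+1) : Pol) = X (i+1) ^ (a+1) by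
    rw [swapVar] ; rw [map_pow, ← swapVar] ; rw [swapVar_X_left]]
  rw [show swapVar i (X (i+1) ^ a : Pol) = X i ^ a by
    rw [swapVar] ; rw [map_pow, ← swapVar] ; rw [swapVar_X_right]]
  ring

lemma Pk_step {n k : ℕ} (hk : k < n) : ddiff k (Pk n k) = Pk n (k+1) := by
  classical
  set s : Finset ℕ := ((Finset.range (n+1)).erase k).erase (k+1) with hs
  have hkmem : k ∈ Finset.range (n+1) := by simp; omega
  have hk1mem : (k+1) ∈ (Finset.range (n+1)).erase k := by
    rw [Finset.mem_erase]; constructor; omega; simp; omega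
  have hexp : ∀ j, j ∈ s → j ≠ k ∧ j ≠ k + 1 := by
    intro j hj
    rw [hs, Finset.mem_erase, Finset.mem_erase] at hj
    exact ⟨hj.2.1, hj.1⟩
  set G : Pol := ∏ j ∈ s, X j ^ (if j < k then n-1-j else n-j) with hG
  have hGinv : swapVar k G = G := by
    rw [hG, swapVar, map_prod]
    refine Finset.prod_congr rfl (fun j hj => ?_)
    rw [map_pow]
    obtain ⟨h1, h2⟩ := hexp j hj
    rw [show (rename ⇑(Equiv.swap k (k+1))) (X j : Pol) = X j from swapVar_X_of_ne h1 h2]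
  have hsplit : Pk n k = X k ^ (n-k) * (X (k+1) ^ (n-(k+1)) * G) := by
    rw [Pk, ← Finset.mul_prod_erase _ _ hkmem, ← Finset.mul_prod_erase _ _ hk1mem]
    rw [if_neg (by omega), if_neg (by omega), ← hs, ← hG]
  have hsplit' : Pk n (k+1) = X k ^ (n-1-k) * (X (k+1) ^ (n-(k+1)) * G) := by
    rw [Pk, ← Finset.mul_prod_erase _ _ hkmem, ← Finset.mul_prod_erase _ _ hk1mem, ← hs]
    rw [if_pos (show k < k+1 by omega), if_neg (show ¬(k+1 < k+1) by omega), hG]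
    congr 2
    refine Finset.prod_congr rfl (fun j hj => ?_)
    obtain ⟨h1, h2⟩ := hexp j hj
    congr 1
    by_cases hjk : j < k
    · rw [if_pos hjk, if_pos (by omega)]
    · rw [if_neg hjk, if_neg (by omega)]
  obtain ⟨a, ha⟩ : ∃ a, n - k - 1 = a := ⟨_, rfl⟩
  have hA : Pk n k = G * (X k ^ (a+1) * X (k+1) ^ a) := by
    rw [hsplit, show n - k = a+1 by omega, show n - (k+1) = a by omega]
    ring
  rw [hA, ddiff_mul_invariant hGinv, ddiff_X_pow]
  rw [hsplit', show n-1-k = a by omega, show n-(k+1) = a by omega]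
  ring

lemma telescope (n : ℕ) : ∀ k, k ≤ n →
    Dw ((List.range k).reverse) (staircase (n+1)) = Pk n k := by
  intro k
  induction k with
  | zero => intro _; rw [List.range_zero, List.reverse_nil, Dw_nil, Pk_zero]
  | succ k ih =>
    intro hk
    rw [List.range_succ, List.reverse_append, List.reverse_singleton]
    show Dw (k :: (List.range k).reverse) _ = _
    rw [Dw_cons, ih (by omega), Pk_step (by omega)]

lemma Dw_range_staircase (n : ℕ) :
    Dw ((List.range n).reverse) (staircase (n+1)) = staircase n := by
  rw [telescope n n le_rfl, Pk_last]

/-! ### Schubert polynomials -/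

def SchN (n : ℕ) (w : Equiv.Perm ℕ) : Pol := Dw (redw (w⁻¹ * w0p n)) (staircase n)

lemma finSupp_u {w : Equiv.Perm ℕ} {n : ℕ} (h : SuppIn w n) : FinSupp (w⁻¹ * w0p n) :=
  finSupp_mul (finSupp_inv (finSupp_iff.mpr ⟨n, h⟩)) (finSupp_w0p n)

lemma cword_prod (n : ℕ) : wp ((List.range n).reverse) = w0p n * w0p (n+1) := by
  induction n with
  | zero =>
    rw [List.range_zero, List.reverse_nil, wp_nil, w0p_zero, w0p_one, one_mul]
  | succ n ih =>
    rw [List.range_succ, List.reverse_append, List.reverse_singleton]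
    show wp (n :: (List.range n).reverse) = _
    rw [wp_cons, ih]
    ext x
    simp only [Equiv.Perm.mul_apply, w0p_apply, sw, Equiv.swap_apply_def]
    split_ifs <;> omega

lemma schN_stab {w : Equiv.Perm ℕ} {n : ℕ} (h : SuppIn w n) : SchN (n+1) w = SchN n w := by
  have hw : FinSupp w := finSupp_iff.mpr ⟨n, h⟩
  have h' : SuppIn w (n+1) := suppIn_mono h (by omega)
  have hu : FinSupp (w⁻¹ * w0p n) := finSupp_u h
  have hu' : FinSupp (w⁻¹ * w0p (n+1)) := finSupp_u h'
  have hlu := len_compl h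
  have hlu' := len_compl h'
  have hKn := Kn_succ n
  -- the concatenated word is reduced for u'
  have hprod : wp (redw (w⁻¹ * w0p n) ++ (List.range n).reverse) = w⁻¹ * w0p (n+1) := by
    rw [wp_append, (red_def.mp (redw_mem hu)).2, cword_prod, ← mul_assoc, mul_assoc (w⁻¹),
      w0p_mul_self, mul_one]
  have hlen : (redw (w⁻¹ * w0p n) ++ (List.range n).reverse).length = len (w⁻¹ * w0p (n+1)) := by
    rw [List.length_append, List.length_reverse, List.length_range,
      (red_def.mp (redw_mem hu)).1]
    omega
  have hred : (redw (w⁻¹ * w0p n) ++ (List.range n).reverse) ∈ Red (w⁻¹ * w0p (n+1)) :=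
    red_def.mpr ⟨hlen, hprod⟩
  unfold SchN
  rw [word_indep (len (w⁻¹ * w0p (n+1))) _ hu' rfl _ _ (redw_mem hu') hred (staircase (n+1))]
  rw [Dw_append, Dw_range_staircase]

lemma schN_eq {w : Equiv.Perm ℕ} {n m : ℕ} (hn : SuppIn w n) (hm : SuppIn w m) :
    SchN n w = SchN m w := by
  wlog hnm : n ≤ m generalizing n m
  · exact (this hm hn (by omega)).symm
  obtain ⟨d, rfl⟩ := Nat.exists_eq_add_of_le hnm
  induction d with
  | zero => rfl
  | succ d ih =>
    have hnd : SuppIn w (n + d) := suppIn_mono hn (by omega)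
    rw [show n + (d+1) = (n+d)+1 by omega, schN_stab hnd]
    exact ih (suppIn_mono hn (by omega)) (by omega)

/-- The Schubert polynomials. -/
def Sch (w : Equiv.Perm ℕ) : Pol :=
  if h : FinSupp w then SchN (finSupp_iff.mp h).choose w else 0

lemma sch_eq_schN {w : Equiv.Perm ℕ} {n : ℕ} (h : SuppIn w n) : Sch w = SchN n w := by
  have hw : FinSupp w := finSupp_iff.mpr ⟨n, h⟩
  rw [Sch, dif_pos hw]
  exact schN_eq (finSupp_iff.mp hw).choose_spec h

lemma red_one : redw (1 : Equiv.Perm ℕ) = [] := by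
  have := redw_mem finSupp_one
  have hlen := (red_def.mp this).1
  rw [len_one] at hlen
  exact List.length_eq_zero_iff.mp hlen

lemma sch_one : Sch 1 = 1 := by
  rw [sch_eq_schN (suppIn_one 0)]
  unfold SchN
  rw [w0p_zero, mul_one, inv_one, red_one, Dw_nil, staircase_zero]

lemma Dw_homog : ∀ (l : List ℕ) (f : Pol) (d : ℕ),
    f.IsHomogeneous (d + l.length) → (Dw l f).IsHomogeneous d := by
  intro l
  induction l with
  | nil => intro f d h; simpa [Dw_nil] using h
  | cons i t ih =>
    intro f d h
    rw [Dw_cons]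
    have ht : (Dw t f).IsHomogeneous (d + 1) := by
      apply ih
      rw [show d + 1 + t.length = d + (t.length + 1) by omega]
      simpa using h
    exact ddiff_homog ht

lemma sch_homog {w : Equiv.Perm ℕ} (hw : FinSupp w) : (Sch w).IsHomogeneous (len w) := by
  obtain ⟨n, h⟩ := finSupp_iff.mp hw
  rw [sch_eq_schN h]
  unfold SchN
  apply Dw_homog
  rw [(red_def.mp (redw_mem (finSupp_u h))).1]
  have := len_compl h
  rw [show len w + len (w⁻¹ * w0p n) = Kn n by omega, Kn_eq_Dn]
  exact staircase_homog n

/-- the divided difference recursion -/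
lemma sch_ddiff (w : Equiv.Perm ℕ) (hw : FinSupp w) (i : ℕ) :
    ddiff i (Sch w) = if w (i+1) < w i then Sch (w * sw i) else 0 := by
  obtain ⟨n₀, h₀⟩ := finSupp_iff.mp hw
  set n := max n₀ (i + 2) with hn
  have h : SuppIn w n := suppIn_mono h₀ (le_max_left _ _)
  have hswn : SuppIn (w * sw i) n := suppIn_mul h (suppIn_sw (le_max_right _ _))
  have hu : FinSupp (w⁻¹ * w0p n) := finSupp_u h
  have hu' : FinSupp ((w * sw i)⁻¹ * w0p n) := finSupp_u hswn
  have hcompl := len_compl h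
  have hcompl' := len_compl hswn
  have huu' : (w * sw i)⁻¹ * w0p n = sw i * (w⁻¹ * w0p n) := by
    rw [mul_inv_rev, mul_assoc]
    congr 1
  rw [sch_eq_schN h]
  by_cases hdesc : w (i+1) < w i
  · rw [if_pos hdesc, sch_eq_schN hswn]
    have hlen := len_mul_sw_desc (finSupp_iff.mpr ⟨n, h⟩) hdesc
    have hred : (i :: redw (w⁻¹ * w0p n)) ∈ Red ((w * sw i)⁻¹ * w0p n) := by
      refine red_def.mpr ⟨?_, ?_⟩
      · rw [List.length_cons, (red_def.mp (redw_mem hu)).1]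
        omega
      · rw [wp_cons, (red_def.mp (redw_mem hu)).2, huu']
    unfold SchN
    rw [word_indep (len ((w * sw i)⁻¹ * w0p n)) _ hu' rfl _ _ (redw_mem hu') hred
      (staircase n)]
    rw [Dw_cons]
  · rw [if_neg hdesc]
    have hasc : w i < w (i+1) :=
      lt_of_le_of_ne (by omega) (apply_ne_apply_succ w i)
    have hlen := len_mul_sw_asc (finSupp_iff.mpr ⟨n, h⟩) hasc
    -- (i :: redw (sw i * u)) is a reduced word for u
    have hred : (i :: redw ((w * sw i)⁻¹ * w0p n)) ∈ Red (w⁻¹ * w0p n) := by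
      refine red_def.mpr ⟨?_, ?_⟩
      · rw [List.length_cons, (red_def.mp (redw_mem hu')).1]
        omega
      · rw [wp_cons, (red_def.mp (redw_mem hu')).2, huu', ← mul_assoc, sw_mul_self, one_mul]
    unfold SchN
    rw [word_indep (len (w⁻¹ * w0p n)) _ hu rfl _ _ (redw_mem hu) hred (staircase n)]
    rw [Dw_cons, ddiff_ddiff]

/-! ### Uniqueness -/

lemma swapVar_eq_of_ddiff_zero {i : ℕ} {f : Pol} (h : ddiff i f = 0) : swapVar i f = f := by
  have := ddiff_spec i f
  rw [h, mul_zero] at this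
  linear_combination this

set_option maxHeartbeats 1000000 in
lemma swap_decomp {a b : ℕ} (hab : a < b) :
    Equiv.swap a (b+1) = sw b * Equiv.swap a b * sw b := by
  ext x
  simp only [Equiv.Perm.mul_apply, sw, Equiv.swap_apply_def]
  split_ifs <;> omega

lemma invariant_all_swaps {f : Pol} (hf : ∀ i, swapVar i f = f) :
    ∀ b a, a < b → rename (⇑(Equiv.swap a b)) f = f := by
  intro b
  induction b with
  | zero => omega
  | succ b ih =>
    intro a hab
    rcases Nat.lt_or_ge a b with hb | hb
    · rw [swap_decomp hb]
      have step : ∀ (σ τ : Equiv.Perm ℕ) (g : Pol),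
          rename (⇑(σ * τ)) g = rename (⇑σ) (rename (⇑τ) g) := fun σ τ g =>
        (swapVar_comp σ τ g).symm
      have hfb : rename (⇑(Equiv.swap b (b+1))) f = f := hf b
      rw [step, step, hfb, ih a hb, hfb]
    · have : a = b := by omega
      subst this
      exact hf a
  
lemma eq_zero_of_symm_homog {f : Pol} {m : ℕ} (hm : 0 < m) (hf : f.IsHomogeneous m)
    (hsym : ∀ i, swapVar i f = f) : f = 0 := by
  by_contra hne
  obtain ⟨d, hd⟩ := (MvPolynomial.support_nonempty.mpr hne)
  have hcoeff : coeff d f ≠ 0 := mem_support_iff.mp hd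
  have hdeg : d.degree = m := by
    by_contra hdm
    exact hcoeff (hf.coeff_eq_zero hdm)
  have hdne : d ≠ 0 := by
    intro h0
    rw [h0] at hdeg
    simp [Finsupp.degree] at hdeg
    omega
  obtain ⟨j, hj⟩ := Finsupp.support_nonempty_iff.mpr hdne
  have hjvars : j ∈ f.vars := (mem_vars j).mpr ⟨d, hd, hj⟩
  set k := f.vars.sup id + 1 with hk
  have hkvars : k ∉ f.vars := by
    intro hmem
    have := Finset.le_sup (f := id) hmem
    simp only [id] at this
    omega
  have hjk : j < k := by
    have := Finset.le_sup (f := id) hjvars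
    simp only [id] at this
    omega
  have hinv : rename (⇑(Equiv.swap j k)) f = f := invariant_all_swaps hsym k j hjk
  have hcoeff2 : coeff (d.mapDomain (Equiv.swap j k)) f ≠ 0 := by
    conv_rhs => skip
    rw [← hinv]
    rw [coeff_rename_mapDomain _ (Equiv.injective _)]
    exact hcoeff
  have hkd : (d.mapDomain (Equiv.swap j k)) k ≠ 0 := by
    have : (d.mapDomain ⇑(Equiv.swap j k)) ((Equiv.swap j k) j) = d j :=
      Finsupp.mapDomain_apply (Equiv.injective _) d j
    rw [Equiv.swap_apply_left] at this
    rw [this]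
    exact Finsupp.mem_support_iff.mp hj
  exact hkvars ((mem_vars k).mpr ⟨_, mem_support_iff.mpr hcoeff2,
    Finsupp.mem_support_iff.mpr hkd⟩)

lemma schubert_unique {S S' : Equiv.Perm ℕ → Pol} (hS : IsSchubertFamily S)
    (hS' : IsSchubertFamily S') : ∀ w, FinSupp w → S w = S' w := by
  obtain ⟨hS1, hS2, hS3⟩ := hS
  obtain ⟨hS1', hS2', hS3'⟩ := hS'
  have main : ∀ k w, FinSupp w → len w = k → S w = S' w := by
    intro k
    induction k using Nat.strong_induction_on with
    | _ k ih =>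
    intro w hw hlen
    rcases Nat.eq_zero_or_pos k with rfl | hk
    · rw [eq_one_of_len_eq_zero hw hlen, hS2, hS2']
    · set f := S w - S' w with hf
      have hfhom : f.IsHomogeneous k := by
        rw [hf, ← hlen]
        exact (hS1 w hw).sub (hS1' w hw)
      have hdz : ∀ i, ddiff i f = 0 := by
        intro i
        rw [hf, ddiff_sub, hS3 w hw i, hS3' w hw i]
        by_cases hdesc : w (i+1) < w i
        · rw [if_pos hdesc, if_pos hdesc]
          have hlen' := len_mul_sw_desc hw hdesc
          rw [ih (len (w * sw i)) (by omega) (w * sw i)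
            (finSupp_mul hw (finSupp_sw i)) rfl]
          ring
        · rw [if_neg hdesc, if_neg hdesc, sub_zero]
      have hzero : f = 0 :=
        eq_zero_of_symm_homog hk hfhom (fun i => swapVar_eq_of_ddiff_zero (hdz i))
      have := sub_eq_zero.mp (hf ▸ hzero)
      exact this
  intro w hw
  exact main (len w) w hw rfl

end SchubertAux
end

/-- existence and uniqueness of the family of Schubert polynomials. -/
theorem stmt_2 :
    (∃ S : Equiv.Perm ℕ → Pol, IsSchubertFamily S) ∧
    ∀ S S' : Equiv.Perm ℕ → Pol, IsSchubertFamily S → IsSchubertFamily S' →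
      ∀ w, FinSupp w → S w = S' w := by
  constructor
  · exact ⟨SchubertAux.Sch, fun w hw => SchubertAux.sch_homog hw, SchubertAux.sch_one,
      fun w hw i => SchubertAux.sch_ddiff w hw i⟩
  · intro S S' hS hS' w hw
    exact SchubertAux.schubert_unique hS hS' w hw
end
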